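/- Suppose 2(g-1) = N(2h - 2 + Σ_{i=1}^l (1 - 1/m_i)) with N ≥ 1, g ≥ 2, h ≥ 0, each m_i ≥ 2, and 3h - 3 + l = 1 (one-dimensional case, so (h,l) = (1,1) or (0,4)), and the signature is nilpotent-admissible. Then N ≤ 8(g-1), and equality holds if and only if the signature is (0; 2,2,2,4) up to ordering. -/
import Mathlib


lemma key_classify (m : Fin 4 → ℕ) (hm : ∀ i, 2 ≤ m i)
    (hadm : ∀ p : ℕ, p.Prime → (∃ i, p ∣ m i) →
      (3 ≤ (Finset.univ.filter fun i => p ∣ m i).card ∨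
        (Finset.univ.filter fun i => p ∣ m i).card = 2))
    (hS2 : ∑ i, (1:ℚ)/(m i) < 2) (hS74 : 7/4 ≤ ∑ i, (1:ℚ)/(m i)) :
    Multiset.map m Finset.univ.val = ({2,2,2,4} : Multiset ℕ) := by
  rw [Fin.sum_univ_four] at hS2 hS74
  have hpos : ∀ i : Fin 4, (0:ℚ) < (m i : ℚ) := fun i => by
    have := hm i; positivity
  have hhalf : ∀ i : Fin 4, (1:ℚ)/(m i) ≤ 1/2 := fun i => by
    have h2 : (2:ℚ) ≤ (m i : ℚ) := by exact_mod_cast hm i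
    rw [div_le_div_iff₀ (hpos i) (by norm_num)]; linarith
  have aux : ∀ i : Fin 4, (1:ℚ)/4 ≤ 1/(m i) → m i ≤ 4 := by
    intro i hq
    have : (m i : ℚ) ≤ 4 := by
      rw [div_le_div_iff₀ (by norm_num) (hpos i)] at hq; linarith
    exact_mod_cast this
  have e0 : m 0 = 2 ∨ m 0 = 3 ∨ m 0 = 4 := by
    have := hm 0
    have := aux 0 (by have := hhalf 1; have := hhalf 2; have := hhalf 3; linarith)
    omega
  have e1 : m 1 = 2 ∨ m 1 = 3 ∨ m 1 = 4 := by
    have := hm 1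
    have := aux 1 (by have := hhalf 0; have := hhalf 2; have := hhalf 3; linarith)
    omega
  have e2 : m 2 = 2 ∨ m 2 = 3 ∨ m 2 = 4 := by
    have := hm 2
    have := aux 2 (by have := hhalf 0; have := hhalf 1; have := hhalf 3; linarith)
    omega
  have e3 : m 3 = 2 ∨ m 3 = 3 ∨ m 3 = 4 := by
    have := hm 3
    have := aux 3 (by have := hhalf 0; have := hhalf 1; have := hhalf 2; linarith)
    omega
  rcases e0 with h0 | h0 | h0 <;> rcases e1 with h1 | h1 | h1 <;>
    rcases e2 with h2 | h2 | h2 <;> rcases e3 with h3 | h3 | h3 <;>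
    rw [h0, h1, h2, h3] at hS2 hS74 <;>
    first
    | (norm_num at hS74; done)
    | (norm_num at hS2; done)
    | (show Multiset.map m {0,1,2,3} = _
       simp only [Multiset.map_cons, Multiset.map_singleton, h0, h1, h2, h3,
         Multiset.insert_eq_cons]
       try decide
       done)
    | (exfalso
       have hex : ∃ i, 3 ∣ m i := by
         first
         | (refine ⟨0, ?_⟩
            rw [h0]
            try norm_num
            done)
         | (refine ⟨1, ?_⟩
            rw [h1]
            try norm_num
            done)
         | (refine ⟨2, ?_⟩
            rw [h2]
            try norm_num
            done)
         | (refine ⟨3, ?_⟩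
            rw [h3]
            try norm_num
            done)
       have hcard : (Finset.univ.filter fun i => 3 ∣ m i).card = 1 := by
         rw [Finset.card_filter, Fin.sum_univ_four, h0, h1, h2, h3]; norm_num
       rcases hadm 3 (by norm_num) hex with hc | hc <;> omega)

lemma sum_of_2224 (m : Fin 4 → ℕ)
    (hM : Multiset.map m Finset.univ.val = ({2,2,2,4} : Multiset ℕ)) :
    ∑ i, (1:ℚ)/(m i) = 7/4 := by
  have : ∑ i, (1:ℚ)/(m i) = ((Multiset.map m Finset.univ.val).map (fun x : ℕ => (1:ℚ)/x)).sum := by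
    rw [Multiset.map_map]
    rfl
  rw [this, hM]
  norm_num

/-- For a nilpotent-admissible signature of Teichmüller dimension 1 with
Riemann–Hurwitz 2(g-1) = N(2h - 2 + Σ(1 - 1/m_i)), one has N ≤ 8(g-1), with equality
iff the signature is (0; 2,2,2,4) up to ordering. -/
theorem nilpotent_dim_one_bound (N g h l : ℕ) (m : Fin l → ℕ)
    (hN : 1 ≤ N) (hg : 2 ≤ g) (hm : ∀ i, 2 ≤ m i)
    (hdim : 3 * (h : ℤ) - 3 + l = 1)
    (hadm : ∀ p : ℕ, p.Prime → (∃ i, p ∣ m i) →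
      (3 ≤ (Finset.univ.filter fun i => p ∣ m i).card ∨ 1 ≤ h ∨
        ((Finset.univ.filter fun i => p ∣ m i).card = 2 ∧
          ∀ i j, p ∣ m i → p ∣ m j →
            p ^ (m i).factorization p = p ^ (m j).factorization p)))
    (hRH : 2 * ((g : ℚ) - 1) = N * (2 * (h : ℚ) - 2 + ∑ i, (1 - 1 / (m i : ℚ)))) :
    N ≤ 8 * (g - 1) ∧
      (N = 8 * (g - 1) ↔
        (h = 0 ∧ l = 4 ∧ Multiset.map m Finset.univ.val = ({2, 2, 2, 4} : Multiset ℕ))) := by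
  have hNq : (1:ℚ) ≤ N := by exact_mod_cast hN
  have hgq : (2:ℚ) ≤ g := by exact_mod_cast hg
  have hcase : (h = 0 ∧ l = 4) ∨ (h = 1 ∧ l = 1) := by omega
  rcases hcase with ⟨hh, hl⟩ | ⟨hh, hl⟩
  · -- h = 0, l = 4
    subst hh; subst hl
    have hadm' : ∀ p : ℕ, p.Prime → (∃ i, p ∣ m i) →
        (3 ≤ (Finset.univ.filter fun i => p ∣ m i).card ∨
          (Finset.univ.filter fun i => p ∣ m i).card = 2) := by
      intro p hp hex
      rcases hadm p hp hex with hc | hc | hc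
      · exact Or.inl hc
      · omega
      · exact Or.inr hc.1
    have hsum : ∑ i : Fin 4, ((1:ℚ) - 1/(m i)) = 4 - ∑ i : Fin 4, (1:ℚ)/(m i) := by
      rw [Fin.sum_univ_four, Fin.sum_univ_four]; ring
    rw [hsum] at hRH
    set S := ∑ i : Fin 4, (1:ℚ)/(m i) with hSdef
    have hRH' : 2 * ((g:ℚ) - 1) = N * (2 - S) := by
      push_cast at hRH ⊢; linear_combination hRH
    have hS2 : S < 2 := by
      by_contra hc
      push_neg at hc
      nlinarith [mul_nonneg (by linarith : (0:ℚ) ≤ (N:ℚ) - 1) (by linarith : (0:ℚ) ≤ S - 2)]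
    have hS74 : S ≤ 7/4 := by
      by_contra hc
      push_neg at hc
      have hM := key_classify m hm hadm' hS2 (le_of_lt hc)
      have := sum_of_2224 m hM
      rw [← hSdef] at this
      linarith
    have hNle : (N:ℚ) ≤ 8 * ((g:ℚ) - 1) := by
      nlinarith [mul_nonneg (by linarith : (0:ℚ) ≤ (N:ℚ)) (by linarith : (0:ℚ) ≤ 7/4 - S)]
    have hcast : ((8 * (g-1) : ℕ) : ℚ) = 8 * ((g:ℚ) - 1) := by
      rw [Nat.cast_mul, Nat.cast_sub (by omega : 1 ≤ g)]; push_cast; ring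
    constructor
    · exact_mod_cast hcast ▸ hNle
    · constructor
      · intro hEq
        refine ⟨rfl, rfl, ?_⟩
        have hNq8 : (N:ℚ) = 8 * ((g:ℚ) - 1) := by
          rw [hEq, hcast]
        have hzero : ((g:ℚ) - 1) * (8 * (2 - S) - 2) = 0 := by
          linear_combination -hRH' - (2 - S) * hNq8
        have hSeq : S = 7/4 := by
          rcases mul_eq_zero.mp hzero with hz | hz
          · linarith
          · linarith
        exact key_classify m hm hadm' hS2 (by linarith)
      · rintro ⟨-, -, hM⟩
        have hSeq := sum_of_2224 m hM
        rw [← hSdef] at hSeq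
        have : (N:ℚ) = ((8 * (g-1) : ℕ) : ℚ) := by
          rw [hcast]; rw [hSeq] at hRH'; linarith
        exact_mod_cast this
  · -- h = 1, l = 1
    subst hh; subst hl
    rw [Fin.sum_univ_one] at hRH
    have hm0 : (2:ℚ) ≤ m 0 := by exact_mod_cast hm 0
    have hmpos : (0:ℚ) < m 0 := by linarith
    have hhalf : (1:ℚ)/(m 0) ≤ 1/2 := by
      rw [div_le_div_iff₀ hmpos (by norm_num)]; linarith
    have hinvpos : (0:ℚ) < 1/(m 0) := by positivity
    have hNle : (N:ℚ) ≤ 4 * ((g:ℚ) - 1) := by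
      push_cast at hRH
      nlinarith [mul_nonneg (by linarith : (0:ℚ) ≤ (N:ℚ)) (by linarith : (0:ℚ) ≤ 1/2 - 1/(m 0))]
    have hNle' : N ≤ 4 * (g - 1) := by
      have hcast : ((4 * (g-1) : ℕ) : ℚ) = 4 * ((g:ℚ) - 1) := by
        rw [Nat.cast_mul, Nat.cast_sub (by omega : 1 ≤ g)]; push_cast; ring
      exact_mod_cast hcast ▸ hNle
    refine ⟨by omega, ?_⟩
    constructor
    · intro hEq; omega
    · rintro ⟨h0, -⟩; omega
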